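/- arXiv:2111.03907 — 3 statements merged into one kernel-verified Lean document; each statement's English description precedes it below -/
import Mathlib

section
/- Suppose that for fixed a, a' ∈ {0,1}, λ ∈ ℝ and ρ ∈ (−1,1) the following hold: (i) (Z₀, Z₁) is a bivariate Gaussian vector with mean zero, unit variances and correlation ρ, independent of X; (ii) [SI2A] for each ã ∈ {0,1}, M(ã) = F_M⁻(Φ(Z_ã) | ã, X) almost surely, where Φ is the standard normal CDF; (iii) [SI2B, substituted form] E[ Y{a, M(a')} | Z₀, Z₁, X ] = expit( logit r_y(M(a'), a, X) + λ(M(a) − M(a')) ) almost surely, where r_y takes values in (0,1), expit(t) = eᵗ/(1+eᵗ) and logit is its inverse. Then E[ Y{a, M(a')} ] = ∫_𝒳 ∫_ℝ ∫_ℝ expit( logit r_y(m'(z₀,z₁,x), a, x) + λ( m(z₀,z₁,x) − m'(z₀,z₁,x) ) ) φ_Σ(z₀, z₁) dz₀ dz₁ F_X(dx), where m(z₀,z₁,x) = F_M⁻(Φ(z_a) | a, x), m'(z₀,z₁,x) = F_M⁻(Φ(z_{a'}) | a', x), Σ is the 2×2 matrix with unit diagonal and off-diagonal entries ρ, and φ_Σ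 is the density of the centered bivariate Gaussian with covariance Σ. -/
open MeasureTheory ProbabilityTheory
open scoped ENNReal NNReal

/-- The logistic (expit) function `t ↦ eᵗ/(1+eᵗ)`. -/
noncomputable def expit (t : ℝ) : ℝ := Real.exp t / (1 + Real.exp t)

/-- The logit function, inverse of `expit` on `(0,1)`. -/
noncomputable def logit (p : ℝ) : ℝ := Real.log (p / (1 - p))

/-- Standard normal cumulative distribution function `Φ`. -/
noncomputable def stdNormalCdf (z : ℝ) : ℝ := ((gaussianReal 0 1) (Set.Iic z)).toReal

/-- Density `φ_Σ` of the centered bivariate Gaussian with unit variances and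
correlation `ρ`, i.e. covariance matrix `Σ` with unit diagonal and off-diagonal `ρ`. -/
noncomputable def biGaussDensity (ρ z₀ z₁ : ℝ) : ℝ :=
  (2 * Real.pi * Real.sqrt (1 - ρ ^ 2))⁻¹ *
    Real.exp (-(z₀ ^ 2 - 2 * ρ * z₀ * z₁ + z₁ ^ 2) / (2 * (1 - ρ ^ 2)))

section Aux

lemma expit_mem_Ioo (t : ℝ) : expit t ∈ Set.Ioo (0:ℝ) 1 := by
  have h := Real.exp_pos t
  constructor
  · unfold expit; positivity
  · unfold expit
    rw [div_lt_one (by positivity)]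
    linarith

lemma abs_expit_le_one (t : ℝ) : |expit t| ≤ 1 := by
  have h := expit_mem_Ioo t
  rw [abs_le]
  exact ⟨by linarith [h.1], by linarith [h.2]⟩

lemma measurable_expit : Measurable expit :=
  (Real.continuous_exp.div (continuous_const.add Real.continuous_exp)
    (fun t => (add_pos one_pos (Real.exp_pos t)).ne')).measurable

lemma measurable_logit : Measurable logit :=
  Real.measurable_log.comp (measurable_id.div (measurable_const.sub measurable_id))

lemma measurable_stdNormalCdf : Measurable stdNormalCdf := by
  have hmono : Monotone stdNormalCdf := fun s t hst =>
    ENNReal.toReal_mono (measure_ne_top _ _) (measure_mono (Set.Iic_subset_Iic.mpr hst))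
  exact hmono.measurable

lemma biGaussDensity_nonneg (ρ z₀ z₁ : ℝ) : 0 ≤ biGaussDensity ρ z₀ z₁ := by
  unfold biGaussDensity; positivity

lemma continuous_biGaussDensity (ρ : ℝ) :
    Continuous fun z : ℝ × ℝ => biGaussDensity ρ z.1 z.2 := by
  unfold biGaussDensity
  fun_prop

/-- The integrand as a function of `(z, x)`. -/
noncomputable def zoibG {𝒳 : Type*} (r_y FMinv : ℝ → Fin 2 → 𝒳 → ℝ)
    (a a' : Fin 2) (l : ℝ) (z : ℝ × ℝ) (x : 𝒳) : ℝ :=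
  expit (logit (r_y (FMinv (stdNormalCdf (![z.1, z.2] a')) a' x) a x)
      + l * (FMinv (stdNormalCdf (![z.1, z.2] a)) a x
          - FMinv (stdNormalCdf (![z.1, z.2] a')) a' x))

lemma zoibG_meas {𝒳 : Type*} [MeasurableSpace 𝒳] {r_y FMinv : ℝ → Fin 2 → 𝒳 → ℝ}
    (hr_meas : Measurable (fun p : ℝ × Fin 2 × 𝒳 => r_y p.1 p.2.1 p.2.2))
    (hFMinv_meas : Measurable (fun p : ℝ × Fin 2 × 𝒳 => FMinv p.1 p.2.1 p.2.2))
    (a a' : Fin 2) (l : ℝ) :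
    Measurable (fun q : (ℝ × ℝ) × 𝒳 => zoibG r_y FMinv a a' l q.1 q.2) := by
  have hcomp : ∀ i : Fin 2, Measurable
      (fun q : (ℝ × ℝ) × 𝒳 => FMinv (stdNormalCdf (![q.1.1, q.1.2] i)) i q.2) := by
    intro i
    have hzi : Measurable (fun q : (ℝ × ℝ) × 𝒳 => (![q.1.1, q.1.2] : Fin 2 → ℝ) i) := by
      fin_cases i
      · exact measurable_fst.fst
      · exact measurable_fst.snd
    exact hFMinv_meas.comp ((measurable_stdNormalCdf.comp hzi).prodMk
      (measurable_const.prodMk measurable_snd))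
  apply measurable_expit.comp
  apply Measurable.add
  · exact measurable_logit.comp (hr_meas.comp ((hcomp a').prodMk
      (measurable_const.prodMk measurable_snd)))
  · exact measurable_const.mul ((hcomp a).sub (hcomp a'))

end Aux

set_option maxHeartbeats 1000000 in
/-- Proposition 1, logit-scale sensitivity identification.
Under (i) a Gaussian copula for `(Z₀, Z₁)` independent of `X`, (ii) SI2A,
and (iii) SI2B in substituted form, the mean of the counterfactual
`Y{a, M(a')}` is identified by the triple integral. -/
theorem zoib_logit_sensitivity_identification
    {Ω 𝒳 : Type*} [MeasurableSpace Ω] [MeasurableSpace 𝒳] [StandardBorelSpace 𝒳]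
    (P : Measure Ω) [IsProbabilityMeasure P]
    (X : Ω → 𝒳) (hX : Measurable X)
    (Z : Fin 2 → Ω → ℝ) (hZ : ∀ i, Measurable (Z i))
    (M : Fin 2 → Ω → ℝ) (hM : ∀ i, Measurable (M i))
    (hMrange : ∀ i ω, M i ω ∈ Set.Icc (0 : ℝ) 1)
    (Y : Fin 2 → ℝ → Ω → ℝ)
    (hYmeas : ∀ i, Measurable (fun p : ℝ × Ω => Y i p.1 p.2))
    (hYrange : ∀ i m ω, Y i m ω ∈ Set.Icc (0 : ℝ) 1)
    (r_y : ℝ → Fin 2 → 𝒳 → ℝ)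
    (hr_meas : Measurable (fun p : ℝ × Fin 2 × 𝒳 => r_y p.1 p.2.1 p.2.2))
    (hr_range : ∀ m i x, r_y m i x ∈ Set.Ioo (0 : ℝ) 1)
    (FMinv : ℝ → Fin 2 → 𝒳 → ℝ)
    (hFMinv_meas : Measurable (fun p : ℝ × Fin 2 × 𝒳 => FMinv p.1 p.2.1 p.2.2))
    (a a' : Fin 2) (l ρ : ℝ) (hρ : ρ ∈ Set.Ioo (-1 : ℝ) 1)
    -- (i): (Z₀, Z₁) is bivariate Gaussian, mean zero, unit variances, correlation ρ,
    -- independent of X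
    (hZlaw : P.map (fun ω => (Z 0 ω, Z 1 ω)) =
      (volume : Measure (ℝ × ℝ)).withDensity
        (fun z : ℝ × ℝ => ENNReal.ofReal (biGaussDensity ρ z.1 z.2)))
    (hindep : IndepFun (fun ω => (Z 0 ω, Z 1 ω)) X P)
    -- (ii): SI2A, M(ã) = F_M⁻(Φ(Z_ã) | ã, X) almost surely
    (hSI2A : ∀ i : Fin 2, ∀ᵐ ω ∂P, M i ω = FMinv (stdNormalCdf (Z i ω)) i (X ω))
    -- (iii): SI2B, substituted form
    (hSI2B :
      P[fun ω => Y a (M a' ω) ω |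
          MeasurableSpace.comap (fun ω => (Z 0 ω, Z 1 ω, X ω)) inferInstance]
        =ᵐ[P] fun ω =>
          expit (logit (r_y (M a' ω) a (X ω)) + l * (M a ω - M a' ω))) :
    ∫ ω, Y a (M a' ω) ω ∂P =
      ∫ x, (∫ z₁, ∫ z₀,
          expit (logit (r_y (FMinv (stdNormalCdf (![z₀, z₁] a')) a' x) a x)
              + l * (FMinv (stdNormalCdf (![z₀, z₁] a)) a x
                  - FMinv (stdNormalCdf (![z₀, z₁] a')) a' x))
            * biGaussDensity ρ z₀ z₁) ∂(P.map X) := by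
  have hZpm : Measurable fun ω => (Z 0 ω, Z 1 ω) := (hZ 0).prodMk (hZ 1)
  haveI hPZ : IsProbabilityMeasure (P.map fun ω => (Z 0 ω, Z 1 ω)) :=
    Measure.isProbabilityMeasure_map hZpm.aemeasurable
  haveI hPX : IsProbabilityMeasure (P.map X) := Measure.isProbabilityMeasure_map hX.aemeasurable
  have hGmeas : Measurable (fun q : (ℝ × ℝ) × 𝒳 => zoibG r_y FMinv a a' l q.1 q.2) :=
    zoibG_meas hr_meas hFMinv_meas a a' l
  have hGbound : ∀ z x, ‖zoibG r_y FMinv a a' l z x‖ ≤ (1 : ℝ) := fun z x => abs_expit_le_one _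
  -- the bivariate density is integrable (it integrates to 1)
  have hφ1 : ∫⁻ z : ℝ × ℝ, ENNReal.ofReal (biGaussDensity ρ z.1 z.2) = 1 := by
    have huniv : (volume : Measure (ℝ × ℝ)).withDensity
        (fun z : ℝ × ℝ => ENNReal.ofReal (biGaussDensity ρ z.1 z.2)) Set.univ = 1 := by
      rw [← hZlaw]; exact measure_univ
    rwa [withDensity_apply _ MeasurableSet.univ, setLIntegral_univ] at huniv
  have hφint : Integrable (fun z : ℝ × ℝ => biGaussDensity ρ z.1 z.2) volume := by
    refine ⟨(continuous_biGaussDensity ρ).aestronglyMeasurable, ?_⟩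
    have h0 : 0 ≤ᵐ[(volume : Measure (ℝ × ℝ))] fun z : ℝ × ℝ => biGaussDensity ρ z.1 z.2 :=
      ae_of_all _ fun z => biGaussDensity_nonneg ρ z.1 z.2
    rw [hasFiniteIntegral_iff_ofReal h0, hφ1]
    exact ENNReal.one_lt_top
  -- step 1: tower property and SI2B
  have hm : MeasurableSpace.comap (fun ω => (Z 0 ω, Z 1 ω, X ω)) inferInstance ≤
      ‹MeasurableSpace Ω› :=
    Measurable.comap_le ((hZ 0).prodMk ((hZ 1).prodMk hX))
  -- inner integral identification
  have hinner : ∀ x : 𝒳, ∫ z, zoibG r_y FMinv a a' l z x ∂(P.map fun ω => (Z 0 ω, Z 1 ω)) =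
      ∫ z₁, ∫ z₀, zoibG r_y FMinv a a' l (z₀, z₁) x * biGaussDensity ρ z₀ z₁ := by
    intro x
    have hIntz : Integrable (fun z : ℝ × ℝ => zoibG r_y FMinv a a' l z x * biGaussDensity ρ z.1 z.2) volume := by
      refine hφint.mono' ?_ (ae_of_all _ fun z => ?_)
      · exact ((hGmeas.comp (measurable_id.prodMk measurable_const)).mul
          (continuous_biGaussDensity ρ).measurable).aestronglyMeasurable
      · rw [norm_mul]
        calc ‖zoibG r_y FMinv a a' l z x‖ * ‖biGaussDensity ρ z.1 z.2‖
            ≤ 1 * ‖biGaussDensity ρ z.1 z.2‖ :=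
              mul_le_mul_of_nonneg_right (hGbound z x) (norm_nonneg _)
          _ = biGaussDensity ρ z.1 z.2 := by
              rw [one_mul, Real.norm_of_nonneg (biGaussDensity_nonneg ρ z.1 z.2)]
    have hφm : Measurable fun z : ℝ × ℝ => (biGaussDensity ρ z.1 z.2).toNNReal :=
      (continuous_biGaussDensity ρ).measurable.real_toNNReal
    calc ∫ z, zoibG r_y FMinv a a' l z x ∂(P.map fun ω => (Z 0 ω, Z 1 ω))
        = ∫ z, zoibG r_y FMinv a a' l z x ∂((volume : Measure (ℝ × ℝ)).withDensity
            fun z : ℝ × ℝ => ((biGaussDensity ρ z.1 z.2).toNNReal : ℝ≥0∞)) := by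
          rw [hZlaw]; rfl
      _ = ∫ z : ℝ × ℝ, (biGaussDensity ρ z.1 z.2).toNNReal • zoibG r_y FMinv a a' l z x :=
          integral_withDensity_eq_integral_smul hφm _
      _ = ∫ z : ℝ × ℝ, zoibG r_y FMinv a a' l z x * biGaussDensity ρ z.1 z.2 := by
          refine integral_congr_ae (ae_of_all _ fun z => ?_)
          show (biGaussDensity ρ z.1 z.2).toNNReal • zoibG r_y FMinv a a' l z x
              = zoibG r_y FMinv a a' l z x * biGaussDensity ρ z.1 z.2
          rw [NNReal.smul_def, Real.coe_toNNReal _ (biGaussDensity_nonneg ρ z.1 z.2),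
            smul_eq_mul, mul_comm]
      _ = ∫ z₁, ∫ z₀, zoibG r_y FMinv a a' l (z₀, z₁) x * biGaussDensity ρ z₀ z₁ := by
          rw [show (volume : Measure (ℝ × ℝ)) =
            (volume : Measure ℝ).prod (volume : Measure ℝ) from rfl]
          exact integral_prod_symm _ (by rwa [show ((volume : Measure ℝ).prod volume) =
            (volume : Measure (ℝ × ℝ)) from rfl])
  -- main chain
  calc ∫ ω, Y a (M a' ω) ω ∂P
      = ∫ ω, (P[fun ω => Y a (M a' ω) ω |
          MeasurableSpace.comap (fun ω => (Z 0 ω, Z 1 ω, X ω)) inferInstance]) ω ∂P :=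
        (integral_condExp hm).symm
    _ = ∫ ω, expit (logit (r_y (M a' ω) a (X ω)) + l * (M a ω - M a' ω)) ∂P :=
        integral_congr_ae hSI2B
    _ = ∫ ω, zoibG r_y FMinv a a' l (Z 0 ω, Z 1 ω) (X ω) ∂P := by
        refine integral_congr_ae ?_
        filter_upwards [hSI2A a, hSI2A a'] with ω h1 h2
        have e : ∀ i : Fin 2, (![Z 0 ω, Z 1 ω] : Fin 2 → ℝ) i = Z i ω := by
          intro i; fin_cases i <;> rfl
        simp only [zoibG, e, h1, h2]
    _ = ∫ q : (ℝ × ℝ) × 𝒳, zoibG r_y FMinv a a' l q.1 q.2 ∂(P.map fun ω => ((Z 0 ω, Z 1 ω), X ω)) :=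
        (integral_map (hZpm.prodMk hX).aemeasurable hGmeas.aestronglyMeasurable).symm
    _ = ∫ q : (ℝ × ℝ) × 𝒳, zoibG r_y FMinv a a' l q.1 q.2
          ∂((P.map fun ω => (Z 0 ω, Z 1 ω)).prod (P.map X)) := by
        rw [(indepFun_iff_map_prod_eq_prod_map_map hZpm.aemeasurable hX.aemeasurable).mp
          hindep]
    _ = ∫ x, ∫ z, zoibG r_y FMinv a a' l z x ∂(P.map fun ω => (Z 0 ω, Z 1 ω)) ∂(P.map X) := by
        refine integral_prod_symm _ ?_
        exact (integrable_const (1 : ℝ)).mono' hGmeas.aestronglyMeasurable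
          (ae_of_all _ fun q => by simpa using hGbound q.1 q.2)
    _ = ∫ x, (∫ z₁, ∫ z₀,
          expit (logit (r_y (FMinv (stdNormalCdf (![z₀, z₁] a')) a' x) a x)
              + l * (FMinv (stdNormalCdf (![z₀, z₁] a)) a x
                  - FMinv (stdNormalCdf (![z₀, z₁] a')) a' x))
            * biGaussDensity ρ z₀ z₁) ∂(P.map X) := by
        refine integral_congr_ae (ae_of_all _ fun x => ?_)
        exact hinner x
end

section
/- Fix a, a' ∈ {0,1} and λ ∈ ℝ, and suppose: (i) [SI2C, substituted form] E[ Y{a, M(a')} | M(0), M(1), X ] = r_y(M(a'), a, X) + λ( M(a) − M(a') ) almost surely; (ii) [SI1] M(a') is conditionally independent of A given X; (iii) consistency M = M(A); (iv) [SI3] P(A = a' | X) > 0 almost surely. Then E[ Y{a, M(a')} ] = ∫_𝒳 ∫_{[0,1]} r_y(m, a, x) f_M(m | a', x) ν_M(dm) F_X(dx) + λ( E[M(a)] − E[M(a')] ). -/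
open MeasureTheory ProbabilityTheory
open scoped NNReal ENNReal

private lemma integrable_of_abs_le {Ω : Type*} [MeasurableSpace Ω] {P : Measure Ω}
    [IsFiniteMeasure P] {f : Ω → ℝ} (hf : AEStronglyMeasurable f P) {C : ℝ}
    (h : ∀ ω, |f ω| ≤ C) : Integrable f P :=
  ⟨hf, HasFiniteIntegral.of_bounded (C := C)
    (Filter.Eventually.of_forall (fun ω => by simpa [Real.norm_eq_abs] using h ω))⟩

/-- Proposition 2, linear-scale sensitivity identification.
Under SI2C (substituted form), SI1, consistency (the observed mediator is
`ω ↦ M (A ω) ω`), and SI3, the mean of the counterfactual `Y{a, M(a')}` equals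
the observed-data functional plus `λ (E[M(a)] − E[M(a')])`. -/
theorem linear_sensitivity_identification
    {Ω 𝒳 : Type*} [MeasurableSpace Ω] [StandardBorelSpace Ω]
    [MeasurableSpace 𝒳] [StandardBorelSpace 𝒳]
    (P : Measure Ω) [IsProbabilityMeasure P]
    (X : Ω → 𝒳) (hX : Measurable X)
    (A : Ω → Fin 2) (hA : Measurable A)
    (M : Fin 2 → Ω → ℝ) (hM : ∀ i, Measurable (M i))
    (hMrange : ∀ i ω, M i ω ∈ Set.Icc (0 : ℝ) 1)
    (Y : Fin 2 → ℝ → Ω → ℝ)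
    (hYmeas : ∀ i, Measurable (fun p : ℝ × Ω => Y i p.1 p.2))
    (hYrange : ∀ i m ω, Y i m ω ∈ Set.Icc (0 : ℝ) 1)
    -- r_y, a bounded jointly measurable version of E[Y | M = m, A = a, X = x]
    (r_y : ℝ → Fin 2 → 𝒳 → ℝ)
    (hr_meas : Measurable (fun p : ℝ × Fin 2 × 𝒳 => r_y p.1 p.2.1 p.2.2))
    (hr_bdd : ∃ C, ∀ m i x, |r_y m i x| ≤ C)
    -- f_M, a jointly measurable conditional density of the observed mediator
    -- given A = a, X = x with respect to a σ-finite measure ν_M on [0,1]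
    (νM : Measure ℝ) [SigmaFinite νM] (hνM : νM (Set.Icc (0 : ℝ) 1)ᶜ = 0)
    (f_M : ℝ → Fin 2 → 𝒳 → ℝ)
    (hfM_meas : Measurable (fun p : ℝ × Fin 2 × 𝒳 => f_M p.1 p.2.1 p.2.2))
    (hfM : ∀ g : ℝ → 𝒳 → ℝ, Measurable (Function.uncurry g) →
      (∃ C, ∀ m x, |g m x| ≤ C) →
      (P[fun ω => g (M (A ω) ω) (X ω) |
          MeasurableSpace.comap (fun ω => (A ω, X ω)) inferInstance])
        =ᵐ[P] fun ω => ∫ m, g m (X ω) * f_M m (A ω) (X ω) ∂νM)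
    (a a' : Fin 2) (l : ℝ)
    -- (i): SI2C, substituted form
    (hSI2C : P[fun ω => Y a (M a' ω) ω |
        MeasurableSpace.comap (fun ω => (M 0 ω, M 1 ω, X ω)) inferInstance]
      =ᵐ[P] fun ω => r_y (M a' ω) a (X ω) + l * (M a ω - M a' ω))
    -- (ii): SI1, M(a') ⫫ A | X
    (hSI1 : CondIndepFun (MeasurableSpace.comap X inferInstance) hX.comap_le (M a') A P)
    -- (iv): SI3, P(A = a' | X) > 0 almost surely
    (hSI3 : ∀ᵐ ω ∂P, 0 < (P[fun ω' => if A ω' = a' then (1 : ℝ) else 0 |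
        MeasurableSpace.comap X inferInstance]) ω) :
    ∫ ω, Y a (M a' ω) ω ∂P =
      (∫ x, (∫ m, r_y m a x * f_M m a' x ∂νM) ∂(P.map X))
        + l * ((∫ ω, M a ω ∂P) - ∫ ω, M a' ω ∂P) := by
  classical
  obtain ⟨C, hC⟩ := hr_bdd
  have hne : Nonempty Ω := by
    by_contra h
    rw [not_nonempty_iff] at h
    have h1 : P Set.univ = 0 := by
      rw [Set.univ_eq_empty_iff.mpr h]; exact measure_empty
    rw [measure_univ] at h1; exact one_ne_zero h1
  obtain ⟨ω0⟩ := hne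
  have hC0 : (0:ℝ) ≤ C := (abs_nonneg _).trans (hC 0 a (X ω0))
  have hG_le : MeasurableSpace.comap X inferInstance ≤ (inferInstance : MeasurableSpace Ω) :=
    hX.comap_le
  have hA2_le : MeasurableSpace.comap (fun ω => (A ω, X ω)) inferInstance
      ≤ (inferInstance : MeasurableSpace Ω) := (hA.prodMk hX).comap_le
  have hXmG : Measurable[MeasurableSpace.comap X inferInstance] X :=
    Measurable.of_comap_le le_rfl
  -- measurability of the observed mediator
  have hMA : Measurable fun ω => M (A ω) ω := by
    have h2 : (fun ω => M (A ω) ω) = fun ω => if A ω = 0 then M 0 ω else M 1 ω := by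
      funext ω
      by_cases h : A ω = 0
      · rw [if_pos h, h]
      · rw [if_neg h, Fin.eq_one_of_ne_zero (A ω) h]
    rw [h2]
    exact Measurable.ite (hA (measurableSet_singleton 0)) (hM 0) (hM 1)
  -- the treated set
  set Aset : Set Ω := A ⁻¹' {a'} with hAsetdef
  have hAset : MeasurableSet Aset := hA (measurableSet_singleton a')
  set pair : Ω → ℝ × 𝒳 := fun ω => (M a' ω, X ω) with hpairdef
  have hpair : Measurable pair := (hM a').prodMk hX
  -- e, a measurable version of P(A = a' | X = x)
  set e : 𝒳 → ℝ := fun x => (condDistrib A X P x {a'}).toReal with hedef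
  have he_meas : Measurable e :=
    (Kernel.measurable_coe _ (measurableSet_singleton a')).ennreal_toReal
  have he01 : ∀ x, e x ∈ Set.Icc (0:ℝ) 1 := by
    intro x
    haveI : IsProbabilityMeasure (condDistrib A X P x) :=
      IsMarkovKernel.isProbabilityMeasure x
    refine ⟨ENNReal.toReal_nonneg, ?_⟩
    rw [hedef]
    simpa using ENNReal.toReal_mono ENNReal.one_ne_top
      (prob_le_one (μ := condDistrib A X P x) (s := {a'}))
  have heX : (fun ω => e (X ω)) =ᵐ[P]
      P[Aset.indicator (fun _ => (1:ℝ)) | MeasurableSpace.comap X inferInstance] :=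
    condDistrib_ae_eq_condExp hX hA (measurableSet_singleton a')
  have heXsm : StronglyMeasurable[MeasurableSpace.comap X inferInstance]
      (fun ω => e (X ω)) := (he_meas.comp hXmG).stronglyMeasurable
  -- positivity
  have hSI3' : ∀ᵐ ω ∂P, 0 <
      (P[Aset.indicator (fun _ => (1:ℝ)) | MeasurableSpace.comap X inferInstance]) ω := by
    have hfun : (fun ω' => if A ω' = a' then (1:ℝ) else 0)
        = Aset.indicator (fun _ => (1:ℝ)) := by
      funext ω; by_cases h : A ω = a' <;> simp [Set.indicator_apply, hAsetdef, h]
    rwa [hfun] at hSI3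
  have he_posae : ∀ᵐ ω ∂P, 0 < e (X ω) := by
    filter_upwards [heX, hSI3'] with ω h1 h2
    rw [h1]; exact h2
  -- the two measures on ℝ × 𝒳
  set dens : Ω → ℝ≥0 := fun ω => Real.toNNReal (e (X ω)) with hdensdef
  have hdens : Measurable dens := (he_meas.comp hX).real_toNNReal
  set μ1 : Measure (ℝ × 𝒳) := (P.restrict Aset).map pair with hμ1def
  set μ2 : Measure (ℝ × 𝒳) := (P.withDensity (fun ω => (dens ω : ℝ≥0∞))).map pair with hμ2def
  haveI : IsFiniteMeasure μ1 := by
    constructor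
    rw [hμ1def, Measure.map_apply hpair MeasurableSet.univ]
    exact lt_of_le_of_lt (measure_mono (Set.subset_univ _))
      (lt_of_le_of_lt (P.restrict_le_self Set.univ) (measure_lt_top P _))
  have hwd_le : (P.withDensity (fun ω => (dens ω : ℝ≥0∞))) Set.univ ≤ 1 := by
    rw [withDensity_apply _ MeasurableSet.univ, Measure.restrict_univ]
    calc ∫⁻ ω, (dens ω : ℝ≥0∞) ∂P ≤ ∫⁻ _, 1 ∂P := by
          refine lintegral_mono fun ω => ?_
          simp only [hdensdef]
          exact_mod_cast Real.toNNReal_le_one.mpr (he01 (X ω)).2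
      _ = 1 := by simp
  haveI : IsFiniteMeasure μ2 := by
    constructor
    rw [hμ2def, Measure.map_apply hpair MeasurableSet.univ]
    exact lt_of_le_of_lt (le_trans (measure_mono (Set.subset_univ _)) hwd_le) ENNReal.one_lt_top
  -- rectangle identity
  have hrect : ∀ s t, MeasurableSet s → MeasurableSet t → μ1 (s ×ˢ t) = μ2 (s ×ˢ t) := by
    intro s t hs ht
    have hprevis : pair ⁻¹' (s ×ˢ t) = (M a' ⁻¹' s) ∩ (X ⁻¹' t) := by
      ext ω; simp [hpairdef, Set.mem_prod]
    have hS' : MeasurableSet (M a' ⁻¹' s) := hM a' hs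
    have hXt : MeasurableSet (X ⁻¹' t) := hX ht
    have hXtG : MeasurableSet[MeasurableSpace.comap X inferInstance] (X ⁻¹' t) := ⟨t, ht, rfl⟩
    have hind1 : Integrable (((M a' ⁻¹' s) ∩ Aset).indicator (fun _ => (1:ℝ))) P :=
      (integrable_const 1).indicator (hS'.inter hAset)
    have hind2 : Integrable ((M a' ⁻¹' s).indicator (fun _ => (1:ℝ))) P :=
      (integrable_const 1).indicator hS'
    have hci := (condIndepFun_iff_condExp_inter_preimage_eq_mul (hM a') hA).mp hSI1
      s {a'} hs (measurableSet_singleton a')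
    have hmul := condExp_stronglyMeasurable_mul_of_bound hG_le heXsm hind2 1
      (Filter.Eventually.of_forall fun ω => by
        rw [Real.norm_eq_abs, abs_of_nonneg (he01 (X ω)).1]; exact (he01 (X ω)).2)
    have hemul_int : Integrable
        ((fun ω => e (X ω)) * (M a' ⁻¹' s).indicator (fun _ => (1:ℝ))) P := by
      refine integrable_of_abs_le
        (((heXsm.mono hG_le).aestronglyMeasurable).mul hind2.1) (C := 1) ?_
      intro ω
      have hpt : ((fun ω => e (X ω)) * (M a' ⁻¹' s).indicator (fun _ => (1:ℝ))) ω
          = e (X ω) * (M a' ⁻¹' s).indicator (fun _ => (1:ℝ)) ω := rfl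
      rw [hpt, abs_mul]
      by_cases hmem : ω ∈ M a' ⁻¹' s
      · rw [Set.indicator_of_mem hmem, abs_one, mul_one, abs_of_nonneg (he01 (X ω)).1]
        exact (he01 (X ω)).2
      · rw [Set.indicator_of_notMem hmem, abs_zero, mul_zero]
        exact zero_le_one
    have hreal : ∫ ω in X ⁻¹' t, (((M a' ⁻¹' s) ∩ Aset).indicator (fun _ => (1:ℝ))) ω ∂P
        = ∫ ω in X ⁻¹' t, ((M a' ⁻¹' s).indicator (fun _ => (1:ℝ)) ω) * e (X ω) ∂P := by
      calc ∫ ω in X ⁻¹' t, (((M a' ⁻¹' s) ∩ Aset).indicator (fun _ => (1:ℝ))) ω ∂P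
          = ∫ ω in X ⁻¹' t, (P[((M a' ⁻¹' s) ∩ Aset).indicator (fun _ => (1:ℝ)) |
              MeasurableSpace.comap X inferInstance]) ω ∂P :=
            (setIntegral_condExp hG_le hind1 hXtG).symm
        _ = ∫ ω in X ⁻¹' t, (P[(M a' ⁻¹' s).indicator (fun _ => (1:ℝ)) |
              MeasurableSpace.comap X inferInstance]) ω
            * (P[Aset.indicator (fun _ => (1:ℝ)) |
              MeasurableSpace.comap X inferInstance]) ω ∂P :=
            integral_congr_ae (ae_restrict_of_ae hci)
        _ = ∫ ω in X ⁻¹' t, (P[(M a' ⁻¹' s).indicator (fun _ => (1:ℝ)) |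
              MeasurableSpace.comap X inferInstance]) ω * e (X ω) ∂P :=
            integral_congr_ae (ae_restrict_of_ae (heX.mono fun ω hω => by
              dsimp only; rw [← hω]))
        _ = ∫ ω in X ⁻¹' t, ((fun ω => e (X ω)) * P[(M a' ⁻¹' s).indicator (fun _ => (1:ℝ)) |
              MeasurableSpace.comap X inferInstance]) ω ∂P := by
            refine setIntegral_congr_fun hXt fun ω _ => ?_
            rw [Pi.mul_apply, mul_comm]
        _ = ∫ ω in X ⁻¹' t, (P[(fun ω => e (X ω)) * (M a' ⁻¹' s).indicator (fun _ => (1:ℝ)) |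
              MeasurableSpace.comap X inferInstance]) ω ∂P :=
            (integral_congr_ae (ae_restrict_of_ae hmul)).symm
        _ = ∫ ω in X ⁻¹' t, ((fun ω => e (X ω)) * (M a' ⁻¹' s).indicator (fun _ => (1:ℝ))) ω ∂P :=
            setIntegral_condExp hG_le hemul_int hXtG
        _ = ∫ ω in X ⁻¹' t, ((M a' ⁻¹' s).indicator (fun _ => (1:ℝ)) ω) * e (X ω) ∂P := by
            refine setIntegral_congr_fun hXt fun ω _ => ?_
            rw [Pi.mul_apply, mul_comm]
    have hL : μ1 (s ×ˢ t)
        = ENNReal.ofReal (∫ ω in X ⁻¹' t,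
            (((M a' ⁻¹' s) ∩ Aset).indicator (fun _ => (1:ℝ))) ω ∂P) := by
      rw [hμ1def, Measure.map_apply hpair (hs.prod ht),
        Measure.restrict_apply (hprevis ▸ (hS'.inter hXt)), hprevis,
        setIntegral_indicator (hS'.inter hAset), setIntegral_const, smul_eq_mul, mul_one,
        measureReal_def, ENNReal.ofReal_toReal (measure_ne_top P _),
        Set.inter_comm (M a' ⁻¹' s) (X ⁻¹' t), Set.inter_assoc]
    have hR : μ2 (s ×ˢ t)
        = ENNReal.ofReal (∫ ω in X ⁻¹' t,
            ((M a' ⁻¹' s).indicator (fun _ => (1:ℝ)) ω) * e (X ω) ∂P) := by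
      have hie : IntegrableOn (fun ω => e (X ω)) ((M a' ⁻¹' s) ∩ X ⁻¹' t) P :=
        (integrable_of_abs_le (he_meas.comp hX).aestronglyMeasurable (C := 1) fun ω => by
          show |e (X ω)| ≤ 1
          rw [abs_of_nonneg (he01 (X ω)).1]; exact (he01 (X ω)).2).integrableOn
      have hnn : 0 ≤ᵐ[P.restrict ((M a' ⁻¹' s) ∩ X ⁻¹' t)] fun ω => e (X ω) :=
        Filter.Eventually.of_forall fun ω => (he01 (X ω)).1
      have hreal2 : ∫ ω in X ⁻¹' t, ((M a' ⁻¹' s).indicator (fun _ => (1:ℝ)) ω) * e (X ω) ∂P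
          = ∫ ω in (M a' ⁻¹' s) ∩ X ⁻¹' t, e (X ω) ∂P := by
        rw [show (∫ ω in X ⁻¹' t, ((M a' ⁻¹' s).indicator (fun _ => (1:ℝ)) ω) * e (X ω) ∂P)
            = ∫ ω in X ⁻¹' t, (M a' ⁻¹' s).indicator (fun ω => e (X ω)) ω ∂P from
          setIntegral_congr_fun hXt fun ω _ => by
            by_cases hmem : ω ∈ M a' ⁻¹' s
            · simp [Set.indicator_of_mem hmem]
            · simp [Set.indicator_of_notMem hmem]]
        rw [setIntegral_indicator hS', Set.inter_comm]
      have hdens_eq : (fun ω => (dens ω : ℝ≥0∞)) = fun ω => ENNReal.ofReal (e (X ω)) := rfl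
      rw [hμ2def, Measure.map_apply hpair (hs.prod ht), hprevis,
        withDensity_apply _ (hS'.inter hXt), hdens_eq,
        ← ofReal_integral_eq_lintegral_ofReal hie hnn, hreal2]
    rw [hL, hR, hreal]
  have hμeq : μ1 = μ2 := by
    refine ext_of_generate_finite _ generateFrom_prod.symm isPiSystem_prod ?_ ?_
    · rintro _ ⟨s, hs, t, ht, rfl⟩
      exact hrect s t hs ht
    · have := hrect Set.univ Set.univ MeasurableSet.univ MeasurableSet.univ
      simpa [Set.univ_prod_univ] using this
  -- transfer of integrals
  have hInt : ∀ G : ℝ × 𝒳 → ℝ, Measurable G →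
      (∫ ω in Aset, G (pair ω) ∂P) = ∫ ω, e (X ω) * G (pair ω) ∂P := by
    intro G hG
    have h1 : ∫ p, G p ∂μ1 = ∫ ω in Aset, G (pair ω) ∂P := by
      rw [hμ1def]
      exact integral_map hpair.aemeasurable hG.aestronglyMeasurable
    have h2 : ∫ p, G p ∂μ2 = ∫ ω, e (X ω) * G (pair ω) ∂P := by
      rw [hμ2def, integral_map hpair.aemeasurable hG.aestronglyMeasurable,
        integral_withDensity_eq_integral_smul hdens]
      congr 1
      funext ω
      rw [hdensdef, NNReal.smul_def, Real.coe_toNNReal _ (he01 (X ω)).1]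
      rfl
    rw [← h1, hμeq, h2]
  -- the density h
  set h : 𝒳 → ℝ := fun x => ∫ m, r_y m a x * f_M m a' x ∂νM with hhdef
  have hh_meas : Measurable h := by
    have hsm : StronglyMeasurable (fun q : 𝒳 × ℝ => r_y q.2 a q.1 * f_M q.2 a' q.1) := by
      apply Measurable.stronglyMeasurable
      exact (hr_meas.comp (measurable_snd.prodMk
          (measurable_const.prodMk measurable_fst))).mul
        (hfM_meas.comp (measurable_snd.prodMk (measurable_const.prodMk measurable_fst)))
    exact (hsm.integral_prod_right' (ν := νM)).measurable
  -- the two test functions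
  have keyu : ∀ u : Set 𝒳, MeasurableSet u →
      ∫ ω in Aset, (fun p : ℝ × 𝒳 => Set.indicator u (fun _ => (1:ℝ)) p.2 * r_y p.1 a p.2)
        (pair ω) ∂P
      = ∫ ω in Aset, (fun p : ℝ × 𝒳 => Set.indicator u (fun _ => (1:ℝ)) p.2 * h p.2)
        (pair ω) ∂P := by
    intro u hu
    have hgum : Measurable
        (Function.uncurry (fun m x => Set.indicator u (fun _ => (1:ℝ)) x * r_y m a x)) := by
      have heq : Function.uncurry (fun m x => Set.indicator u (fun _ => (1:ℝ)) x * r_y m a x)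
          = fun p : ℝ × 𝒳 => Set.indicator u (fun _ => (1:ℝ)) p.2 * r_y p.1 a p.2 := rfl
      rw [heq]
      exact ((measurable_const.indicator hu).comp measurable_snd).mul
        (hr_meas.comp (measurable_fst.prodMk (measurable_const.prodMk measurable_snd)))
    have hgub : ∀ m x, |Set.indicator u (fun _ => (1:ℝ)) x * r_y m a x| ≤ C := by
      intro m x
      by_cases hmem : x ∈ u
      · simpa [Set.indicator_of_mem hmem] using hC m a x
      · simp [Set.indicator_of_notMem hmem, hC0]
    have hcond := hfM (fun m x => Set.indicator u (fun _ => (1:ℝ)) x * r_y m a x) hgum ⟨C, hgub⟩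
    have hintg : Integrable
        (fun ω => Set.indicator u (fun _ => (1:ℝ)) (X ω) * r_y (M (A ω) ω) a (X ω)) P := by
      refine integrable_of_abs_le ?_ (fun ω => hgub _ _)
      exact (((measurable_const.indicator hu).comp hX).mul
        (hr_meas.comp (hMA.prodMk (measurable_const.prodMk hX)))).aestronglyMeasurable
    have hAset2 : MeasurableSet[MeasurableSpace.comap (fun ω => (A ω, X ω)) inferInstance]
        Aset := by
      refine ⟨{a'} ×ˢ (Set.univ : Set 𝒳), (measurableSet_singleton a').prod MeasurableSet.univ, ?_⟩
      ext ω; simp [hAsetdef, eq_comm]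
    calc ∫ ω in Aset, (fun p : ℝ × 𝒳 => Set.indicator u (fun _ => (1:ℝ)) p.2 * r_y p.1 a p.2)
          (pair ω) ∂P
        = ∫ ω in Aset, Set.indicator u (fun _ => (1:ℝ)) (X ω) * r_y (M (A ω) ω) a (X ω) ∂P := by
          refine setIntegral_congr_fun hAset fun ω hω => ?_
          have hω' : A ω = a' := hω
          simp only [hpairdef, hω']
      _ = ∫ ω in Aset, (P[fun ω => Set.indicator u (fun _ => (1:ℝ)) (X ω)
            * r_y (M (A ω) ω) a (X ω) | MeasurableSpace.comap (fun ω => (A ω, X ω))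
            inferInstance]) ω ∂P := (setIntegral_condExp hA2_le hintg hAset2).symm
      _ = ∫ ω in Aset, (∫ m, (Set.indicator u (fun _ => (1:ℝ)) (X ω) * r_y m a (X ω))
            * f_M m (A ω) (X ω) ∂νM) ∂P := integral_congr_ae (ae_restrict_of_ae hcond)
      _ = ∫ ω in Aset, (fun p : ℝ × 𝒳 => Set.indicator u (fun _ => (1:ℝ)) p.2 * h p.2)
            (pair ω) ∂P := by
          refine setIntegral_congr_fun hAset fun ω hω => ?_
          have hω' : A ω = a' := hω
          simp only [hpairdef, hω', hhdef, mul_assoc]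
          rw [integral_const_mul]
  -- w: kernel version of the conditional expectation of r_y(M a', a, X) given X
  set w : 𝒳 → ℝ := fun x => ∫ m, r_y m a x ∂(condDistrib (M a') X P x) with hwdef
  have hw_meas : Measurable w := by
    have hsm : StronglyMeasurable (fun q : 𝒳 × ℝ => r_y q.2 a q.1) :=
      Measurable.stronglyMeasurable
        (hr_meas.comp (measurable_snd.prodMk (measurable_const.prodMk measurable_fst)))
    exact (hsm.integral_kernel_prod_right' (κ := condDistrib (M a') X P)).measurable
  have hwB : ∀ x, |w x| ≤ C := by
    intro x
    haveI : IsProbabilityMeasure (condDistrib (M a') X P x) :=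
      IsMarkovKernel.isProbabilityMeasure x
    have h1 : ‖∫ m, r_y m a x ∂(condDistrib (M a') X P x)‖
        ≤ C * ((condDistrib (M a') X P x) Set.univ).toReal :=
      norm_integral_le_of_norm_le_const (Filter.Eventually.of_forall fun m => by
        rw [Real.norm_eq_abs]; exact hC m a x)
    rw [hwdef]
    simpa using h1
  have hg0meas : Measurable (fun ω => r_y (M a' ω) a (X ω)) :=
    hr_meas.comp ((hM a').prodMk (measurable_const.prodMk hX))
  have hg0int : Integrable (fun ω => r_y (M a' ω) a (X ω)) P :=
    integrable_of_abs_le hg0meas.aestronglyMeasurable (fun ω => hC _ a _)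
  have hWw : P[fun ω => r_y (M a' ω) a (X ω) | MeasurableSpace.comap X inferInstance]
      =ᵐ[P] fun ω => w (X ω) := by
    have hsm : StronglyMeasurable (fun q : 𝒳 × ℝ => r_y q.2 a q.1) :=
      Measurable.stronglyMeasurable
        (hr_meas.comp (measurable_snd.prodMk (measurable_const.prodMk measurable_fst)))
    have := condExp_prod_ae_eq_integral_condDistrib (μ := P) (X := X) (Y := M a')
      hX (hM a').aemeasurable hsm (f := fun q : 𝒳 × ℝ => r_y q.2 a q.1) hg0int
    exact this
  -- integrability on (P.map X)
  haveI : IsProbabilityMeasure (P.map X) := Measure.isProbabilityMeasure_map hX.aemeasurable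
  have hew_int : Integrable (fun x => e x * w x) (P.map X) := by
    refine integrable_of_abs_le ((he_meas.mul hw_meas).aestronglyMeasurable) (C := C) ?_
    intro x
    rw [abs_mul]
    calc |e x| * |w x| ≤ 1 * C := by
          refine mul_le_mul ?_ (hwB x) (abs_nonneg _) zero_le_one
          rw [abs_of_nonneg (he01 x).1]; exact (he01 x).2
      _ = C := one_mul C
  have heh_int : Integrable (fun x => e x * h x) (P.map X) := by
    have hg0m2 : Measurable (Function.uncurry (fun m x => r_y m a x)) :=
      hr_meas.comp (measurable_fst.prodMk (measurable_const.prodMk measurable_snd))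
    have hcne := hfM (fun m x => r_y m a x) hg0m2 ⟨C, fun m x => hC m a x⟩
    have hint0 : Integrable (fun ω => ∫ m, r_y m a (X ω) * f_M m (A ω) (X ω) ∂νM) P :=
      integrable_condExp.congr hcne
    have h5 : IntegrableOn (fun ω => h (X ω)) Aset P := by
      refine (hint0.integrableOn).congr_fun ?_ hAset
      intro ω hω
      have hω' : A ω = a' := hω
      simp only [hhdef, hω']
    have h6 : Integrable (fun p : ℝ × 𝒳 => h p.2) μ1 := by
      rw [hμ1def]
      exact (integrable_map_measure ((hh_meas.comp measurable_snd).aestronglyMeasurable)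
        hpair.aemeasurable).mpr h5
    rw [hμeq, hμ2def] at h6
    have h8 : Integrable (fun ω => h (X ω)) (P.withDensity (fun ω => (dens ω : ℝ≥0∞))) :=
      (integrable_map_measure ((hh_meas.comp measurable_snd).aestronglyMeasurable)
        hpair.aemeasurable).mp h6
    have h9 : Integrable (fun ω => (dens ω : ℝ) • h (X ω)) P :=
      (integrable_withDensity_iff_integrable_coe_smul hdens).mp h8
    have h10 : Integrable (fun ω => e (X ω) * h (X ω)) P := by
      refine h9.congr (Filter.Eventually.of_forall fun ω => ?_)
      rw [hdensdef]
      simp only [smul_eq_mul]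
      rw [Real.coe_toNNReal _ (he01 (X ω)).1]
    exact (integrable_map_measure ((he_meas.mul hh_meas).aestronglyMeasurable)
      hX.aemeasurable).mpr h10
  -- set-integral equality on (P.map X)
  have hsetint : ∀ u : Set 𝒳, MeasurableSet u →
      ∫ x in u, e x * w x ∂(P.map X) = ∫ x in u, e x * h x ∂(P.map X) := by
    intro u hu
    have hmapL : ∫ x in u, e x * w x ∂(P.map X) = ∫ ω in X ⁻¹' u, e (X ω) * w (X ω) ∂P :=
      setIntegral_map hu (he_meas.mul hw_meas).aestronglyMeasurable hX.aemeasurable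
    have hmapR : ∫ x in u, e x * h x ∂(P.map X) = ∫ ω in X ⁻¹' u, e (X ω) * h (X ω) ∂P :=
      setIntegral_map hu (he_meas.mul hh_meas).aestronglyMeasurable hX.aemeasurable
    have hXu : MeasurableSet (X ⁻¹' u) := hX hu
    have hbsm : StronglyMeasurable[MeasurableSpace.comap X inferInstance]
        (fun ω => Set.indicator u (fun _ => (1:ℝ)) (X ω) * e (X ω)) :=
      (((measurable_const.indicator hu).comp hXmG).mul (he_meas.comp hXmG)).stronglyMeasurable
    have hbbd : ∀ ω, ‖Set.indicator u (fun _ => (1:ℝ)) (X ω) * e (X ω)‖ ≤ 1 := by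
      intro ω; rw [Real.norm_eq_abs, abs_mul]
      by_cases hmem : X ω ∈ u
      · simp [Set.indicator_of_mem hmem, abs_of_nonneg (he01 (X ω)).1, (he01 (X ω)).2]
      · simp [Set.indicator_of_notMem hmem]
    have hpull := condExp_stronglyMeasurable_mul_of_bound hG_le hbsm hg0int 1
      (Filter.Eventually.of_forall hbbd)
    have hbg0int : Integrable ((fun ω => Set.indicator u (fun _ => (1:ℝ)) (X ω) * e (X ω))
        * fun ω => r_y (M a' ω) a (X ω)) P := by
      refine integrable_of_abs_le (((hbsm.mono hG_le).aestronglyMeasurable).mul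
        hg0meas.aestronglyMeasurable) (C := C) ?_
      intro ω
      rw [Pi.mul_apply, abs_mul]
      calc |Set.indicator u (fun _ => (1:ℝ)) (X ω) * e (X ω)| * |r_y (M a' ω) a (X ω)|
          ≤ 1 * C := mul_le_mul (hbbd ω) (hC _ a _)
            (abs_nonneg _) zero_le_one
        _ = C := one_mul C
    have hL1 : ∫ ω in X ⁻¹' u, e (X ω) * w (X ω) ∂P
        = ∫ ω, (Set.indicator u (fun _ => (1:ℝ)) (X ω) * e (X ω)) * w (X ω) ∂P := by
      rw [← integral_indicator hXu]
      congr 1; funext ω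
      by_cases hmem : X ω ∈ u
      · simp [Set.indicator_apply, hmem]
      · simp [Set.indicator_apply, hmem]
    have hL2 : ∫ ω, (Set.indicator u (fun _ => (1:ℝ)) (X ω) * e (X ω)) * w (X ω) ∂P
        = ∫ ω, (Set.indicator u (fun _ => (1:ℝ)) (X ω) * e (X ω)) * r_y (M a' ω) a (X ω) ∂P := by
      calc ∫ ω, (Set.indicator u (fun _ => (1:ℝ)) (X ω) * e (X ω)) * w (X ω) ∂P
          = ∫ ω, (Set.indicator u (fun _ => (1:ℝ)) (X ω) * e (X ω))
              * (P[fun ω => r_y (M a' ω) a (X ω) |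
                MeasurableSpace.comap X inferInstance]) ω ∂P :=
            (integral_congr_ae (hWw.mono fun ω hω => by rw [hω])).symm
        _ = ∫ ω, (P[(fun ω => Set.indicator u (fun _ => (1:ℝ)) (X ω) * e (X ω))
              * fun ω => r_y (M a' ω) a (X ω) |
                MeasurableSpace.comap X inferInstance]) ω ∂P :=
            (integral_congr_ae hpull).symm
        _ = ∫ ω, ((fun ω => Set.indicator u (fun _ => (1:ℝ)) (X ω) * e (X ω))
              * fun ω => r_y (M a' ω) a (X ω)) ω ∂P := integral_condExp hG_le
        _ = ∫ ω, (Set.indicator u (fun _ => (1:ℝ)) (X ω) * e (X ω))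
              * r_y (M a' ω) a (X ω) ∂P := rfl
    have hG1 : Measurable (fun p : ℝ × 𝒳 => Set.indicator u (fun _ => (1:ℝ)) p.2
        * r_y p.1 a p.2) :=
      ((measurable_const.indicator hu).comp measurable_snd).mul
        (hr_meas.comp (measurable_fst.prodMk (measurable_const.prodMk measurable_snd)))
    have hG2 : Measurable (fun p : ℝ × 𝒳 => Set.indicator u (fun _ => (1:ℝ)) p.2 * h p.2) :=
      ((measurable_const.indicator hu).comp measurable_snd).mul (hh_meas.comp measurable_snd)
    have hkey := keyu u hu
    rw [hInt _ hG1, hInt _ hG2] at hkey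
    have hL3 : ∫ ω, (Set.indicator u (fun _ => (1:ℝ)) (X ω) * e (X ω))
        * r_y (M a' ω) a (X ω) ∂P
        = ∫ ω, e (X ω) * (fun p : ℝ × 𝒳 => Set.indicator u (fun _ => (1:ℝ)) p.2
          * r_y p.1 a p.2) (pair ω) ∂P := by
      congr 1; funext ω
      simp only [hpairdef]
      ring
    have hR1 : ∫ ω in X ⁻¹' u, e (X ω) * h (X ω) ∂P
        = ∫ ω, e (X ω) * (fun p : ℝ × 𝒳 => Set.indicator u (fun _ => (1:ℝ)) p.2 * h p.2)
          (pair ω) ∂P := by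
      rw [← integral_indicator hXu]
      congr 1; funext ω
      by_cases hmem : X ω ∈ u
      · simp [Set.indicator_apply, hmem, hpairdef]
      · simp [Set.indicator_apply, hmem, hpairdef]
    rw [hmapL, hmapR, hL1, hL2, hL3, hkey, ← hR1]
  have hweq : (fun x => e x * w x) =ᵐ[P.map X] fun x => e x * h x :=
    ae_eq_of_forall_setIntegral_eq_of_sigmaFinite
      (fun s _ _ => hew_int.integrableOn) (fun s _ _ => heh_int.integrableOn)
      (fun s hs _ => hsetint s hs)
  have he_pos_map : ∀ᵐ x ∂(P.map X), 0 < e x := by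
    rw [ae_map_iff hX.aemeasurable (measurableSet_lt measurable_const he_meas)]
    exact he_posae
  have hwh : w =ᵐ[P.map X] h := by
    filter_upwards [hweq, he_pos_map] with x h1 h2
    exact mul_left_cancel₀ (ne_of_gt h2) h1
  -- main identity for the r_y term
  have hfinal2 : ∫ ω, r_y (M a' ω) a (X ω) ∂P = ∫ x, h x ∂(P.map X) := by
    calc ∫ ω, r_y (M a' ω) a (X ω) ∂P
        = ∫ ω, (P[fun ω => r_y (M a' ω) a (X ω) |
            MeasurableSpace.comap X inferInstance]) ω ∂P := (integral_condExp hG_le).symm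
      _ = ∫ ω, w (X ω) ∂P := integral_congr_ae hWw
      _ = ∫ x, w x ∂(P.map X) :=
          (integral_map hX.aemeasurable hw_meas.aestronglyMeasurable).symm
      _ = ∫ x, h x ∂(P.map X) := integral_congr_ae hwh
  -- part 1: SI2C
  have hYint : Integrable (fun ω => Y a (M a' ω) ω) P := by
    refine integrable_of_abs_le (((hYmeas a).comp
      ((hM a').prodMk measurable_id)).aestronglyMeasurable) (C := 1) ?_
    intro ω
    rw [abs_le]
    exact ⟨le_trans (by norm_num) (hYrange a (M a' ω) ω).1, (hYrange a (M a' ω) ω).2⟩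
  have hMint : ∀ i, Integrable (M i) P := by
    intro i
    refine integrable_of_abs_le (hM i).aestronglyMeasurable (C := 1) ?_
    intro ω
    rw [abs_le]
    exact ⟨le_trans (by norm_num) (hMrange i ω).1, (hMrange i ω).2⟩
  have h1 : ∫ ω, Y a (M a' ω) ω ∂P
      = ∫ ω, (r_y (M a' ω) a (X ω) + l * (M a ω - M a' ω)) ∂P := by
    rw [← integral_condExp (((hM 0).prodMk ((hM 1).prodMk hX)).comap_le) (f := fun ω => Y a (M a' ω) ω)]
    exact integral_congr_ae hSI2C
  have hsub : Integrable (fun ω => M a ω - M a' ω) P := Integrable.sub (hMint a) (hMint a')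
  have hlin : Integrable (fun ω => l * (M a ω - M a' ω)) P := hsub.const_mul l
  rw [h1, integral_add hg0int hlin, hfinal2, integral_const_mul,
    integral_sub (hMint a) (hMint a')]
end

section
/- Suppose that for every pair (a, a') ∈ {0,1}² the hypotheses of the linear-scale identification result hold, namely: E[ Y{a, M(a')} | M(0), M(1), X ] = r_y(M(a'), a, X) + λ( M(a) − M(a') ) almost surely, M(a') is conditionally independent of A given X, M = M(A), and P(A = a' | X) > 0 almost surely. Define ϖ = E[M(1)] − E[M(0)], δ₀(a) = ∫_𝒳 ∫_{[0,1]} r_y(m, a, x) ( f_M(m | 1, x) − f_M(m | 0, x) ) ν_M(dm) F_X(dx), and ζ₀(a) = ∫_𝒳 ∫_{[0,1]} ( r_y(m, 1, x) − r_y(m, 0, x) ) f_M(m | a, x) ν_M(dm) F_X(dx). Then for a ∈ {0,1}, δ(a) = δ₀(a) − λϖ and ζ(a) = ζ₀(a) + λϖ; consequently the average total effect satisfies τ = δ₀(1) + ζ₀(0), which does not depend on the sensitivity parameter λ. -/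
open MeasureTheory ProbabilityTheory

section helpers
variable {Ω : Type*} [mΩ : MeasurableSpace Ω]

lemma integrable_of_bound (P : Measure Ω) [IsFiniteMeasure P] (f : Ω → ℝ) (C : ℝ)
    (hf : AEStronglyMeasurable f P) (h : ∀ ω, |f ω| ≤ C) : Integrable f P :=
  ⟨hf, HasFiniteIntegral.of_bounded (C := C) (ae_of_all _ fun ω => by
    simpa [Real.norm_eq_abs] using h ω)⟩

lemma comap_fst_le {𝒳 : Type*} [m𝒳 : MeasurableSpace 𝒳] (X : Ω → 𝒳) (A : Ω → Fin 2) :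
    MeasurableSpace.comap X inferInstance ≤
      MeasurableSpace.comap (fun ω => (A ω, X ω)) inferInstance := by
  rintro s ⟨B, hB, rfl⟩
  exact ⟨Set.univ ×ˢ B, MeasurableSet.univ.prod hB, by ext ω; simp⟩

end helpers


lemma condexpKernel_ae_dirac_comap {Ω 𝒳 : Type*} [mΩ : MeasurableSpace Ω] [StandardBorelSpace Ω]
    [m𝒳 : MeasurableSpace 𝒳] [StandardBorelSpace 𝒳]
    (P : Measure Ω) [IsProbabilityMeasure P] (X : Ω → 𝒳) (hX : Measurable X) :
    ∀ᵐ ω ∂P, (condExpKernel P (MeasurableSpace.comap X inferInstance) ω)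
      {ω' | X ω' ≠ X ω} = 0 := by
  obtain ⟨e, he⟩ := MeasureTheory.exists_measurableEmbedding_real 𝒳
  have hG : MeasurableSpace.comap X inferInstance ≤ mΩ := hX.comap_le
  have hsG : ∀ q : ℚ, MeasurableSet[MeasurableSpace.comap X inferInstance]
      (X ⁻¹' (e ⁻¹' Set.Iic (q : ℝ))) := fun q =>
    ⟨e ⁻¹' Set.Iic (q : ℝ), he.measurable measurableSet_Iic, rfl⟩
  have hs : ∀ q : ℚ, MeasurableSet (X ⁻¹' (e ⁻¹' Set.Iic (q : ℝ))) := fun q => hG _ (hsG q)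
  have h1 : ∀ q : ℚ, (fun ω => (condExpKernel P (MeasurableSpace.comap X inferInstance) ω
        (X ⁻¹' (e ⁻¹' Set.Iic (q : ℝ)))).toReal)
      =ᵐ[P] fun ω => Set.indicator (X ⁻¹' (e ⁻¹' Set.Iic (q : ℝ))) (fun _ => (1 : ℝ)) ω := by
    intro q
    refine (condExpKernel_ae_eq_condExp hG (hs q)).trans ?_
    rw [condExp_of_stronglyMeasurable hG
      (stronglyMeasurable_const.indicator (hsG q))
      ((integrable_const (1 : ℝ)).indicator (hs q))]
  have h2 : ∀ᵐ ω ∂P, ∀ q : ℚ, (condExpKernel P (MeasurableSpace.comap X inferInstance) ω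
        (X ⁻¹' (e ⁻¹' Set.Iic (q : ℝ)))).toReal
      = Set.indicator (X ⁻¹' (e ⁻¹' Set.Iic (q : ℝ))) (fun _ => (1 : ℝ)) ω := ae_all_iff.mpr h1
  filter_upwards [h2] with ω hω
  haveI : IsProbabilityMeasure (condExpKernel P (MeasurableSpace.comap X inferInstance) ω) :=
    inferInstance
  have hnull : ∀ q : ℚ, (condExpKernel P (MeasurableSpace.comap X inferInstance) ω)
      (if e (X ω) ≤ (q : ℝ) then (X ⁻¹' (e ⁻¹' Set.Iic (q : ℝ)))ᶜ
        else X ⁻¹' (e ⁻¹' Set.Iic (q : ℝ))) = 0 := by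
    intro q
    by_cases hq : e (X ω) ≤ (q : ℝ)
    · have hmem : ω ∈ X ⁻¹' (e ⁻¹' Set.Iic (q : ℝ)) := hq
      have h1' : ((condExpKernel P (MeasurableSpace.comap X inferInstance) ω)
          (X ⁻¹' (e ⁻¹' Set.Iic (q : ℝ)))).toReal = 1 := by
        rw [hω q, Set.indicator_of_mem hmem]
      have heq : (condExpKernel P (MeasurableSpace.comap X inferInstance) ω)
          (X ⁻¹' (e ⁻¹' Set.Iic (q : ℝ))) = 1 := by
        rwa [ENNReal.toReal_eq_one_iff] at h1'
      rw [if_pos hq, measure_compl (hs q) (measure_ne_top _ _), heq, measure_univ, tsub_self]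
    · have hmem : ω ∉ X ⁻¹' (e ⁻¹' Set.Iic (q : ℝ)) := hq
      have h0 : ((condExpKernel P (MeasurableSpace.comap X inferInstance) ω)
          (X ⁻¹' (e ⁻¹' Set.Iic (q : ℝ)))).toReal = 0 := by
        rw [hω q, Set.indicator_of_notMem hmem]
      rw [if_neg hq]
      rcases (ENNReal.toReal_eq_zero_iff _).mp h0 with h | h
      · exact h
      · exact absurd h (measure_ne_top _ _)
  refine measure_mono_null ?_ (measure_iUnion_null hnull)
  intro ω' hω'
  have hne : e (X ω') ≠ e (X ω) := fun h => hω' (he.injective h)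
  rcases lt_or_gt_of_ne hne with h | h
  · obtain ⟨q, hq1, hq2⟩ := exists_rat_btwn h
    refine Set.mem_iUnion.mpr ⟨q, ?_⟩
    rw [if_neg (not_le.mpr hq2)]
    exact le_of_lt hq1
  · obtain ⟨q, hq1, hq2⟩ := exists_rat_btwn h
    refine Set.mem_iUnion.mpr ⟨q, ?_⟩
    rw [if_pos (le_of_lt hq1)]
    exact fun hmem => absurd (lt_of_le_of_lt hmem hq2) (lt_irrefl _)


-- pi system of singletons helper used above
lemma isPiSystem_iUnion_singleton : IsPiSystem (⋃ i : Fin 2, {({i} : Set (Fin 2))}) := by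
  rintro s hs t ht hst
  simp only [Set.mem_iUnion, Set.mem_singleton_iff] at hs ht
  obtain ⟨i, rfl⟩ := hs
  obtain ⟨j, rfl⟩ := ht
  obtain ⟨k, hk⟩ := hst
  simp only [Set.mem_inter_iff, Set.mem_singleton_iff] at hk
  obtain ⟨rfl, rfl⟩ := hk
  simpa using Set.mem_iUnion.mpr ⟨k, rfl⟩

lemma ae_indepFun_of_condIndepFun {Ω 𝒳 : Type*} [mΩ : MeasurableSpace Ω] [StandardBorelSpace Ω]
    [m𝒳 : MeasurableSpace 𝒳] [StandardBorelSpace 𝒳]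
    (P : Measure Ω) [IsProbabilityMeasure P] (X : Ω → 𝒳) (hX : Measurable X)
    (M' : Ω → ℝ) (hM' : Measurable M') (A : Ω → Fin 2) (hA : Measurable A)
    (h : CondIndepFun (MeasurableSpace.comap X inferInstance) hX.comap_le M' A P) :
    ∀ᵐ ω ∂P, IndepFun M' A (condExpKernel P (MeasurableSpace.comap X inferInstance) ω) := by
  have hbase : ∀ (q : ℚ) (i : Fin 2), ∀ᵐ ω ∂P,
      (condExpKernel P (MeasurableSpace.comap X inferInstance) ω)
        (M' ⁻¹' Set.Iic (q : ℝ) ∩ A ⁻¹' {i})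
      = (condExpKernel P (MeasurableSpace.comap X inferInstance) ω) (M' ⁻¹' Set.Iic (q : ℝ))
        * (condExpKernel P (MeasurableSpace.comap X inferInstance) ω) (A ⁻¹' {i}) := by
    intro q i
    refine ae_of_ae_trim hX.comap_le ?_
    exact h _ _ ⟨Set.Iic (q : ℝ), measurableSet_Iic, rfl⟩
      ⟨{i}, MeasurableSet.singleton i, rfl⟩
  have hbase' := ae_all_iff.mpr fun q : ℚ => ae_all_iff.mpr (hbase q)
  filter_upwards [hbase'] with ω hω
  -- now prove IndepFun for the fixed measure
  set κ : Measure Ω := condExpKernel P (MeasurableSpace.comap X inferInstance) ω with hκ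
  have hindep : Indep (MeasurableSpace.comap M' inferInstance)
      (MeasurableSpace.comap A inferInstance) κ := by
    haveI : IsProbabilityMeasure κ := by rw [hκ]; infer_instance
    refine IndepSets.indep hM'.comap_le hA.comap_le
      (Real.isPiSystem_Iic_rat.comap M')
      ((isPiSystem_iUnion_singleton).comap A) ?_ ?_ ?_
    · rw [show (inferInstance : MeasurableSpace ℝ) = borel ℝ from BorelSpace.measurable_eq,
        Real.borel_eq_generateFrom_Iic_rat, MeasurableSpace.comap_generateFrom]
      rfl
    · rw [show (inferInstance : MeasurableSpace (Fin 2))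
          = MeasurableSpace.generateFrom (⋃ i : Fin 2, {({i} : Set (Fin 2))}) from ?_,
        MeasurableSpace.comap_generateFrom]
      · rfl
      · refine le_antisymm ?_ (MeasurableSpace.generateFrom_le fun t _ => ?_)
        · intro s _
          have hs : s = ⋃ i ∈ s, {i} := by ext j; simp
          rw [hs]
          refine MeasurableSet.biUnion s.to_countable fun i _ =>
            MeasurableSpace.measurableSet_generateFrom ?_
          exact Set.mem_iUnion.mpr ⟨i, rfl⟩
        · exact MeasurableSet.of_discrete
    · rw [IndepSets_iff]
      rintro _ _ ⟨t1, ht1, rfl⟩ ⟨t2, ht2, rfl⟩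
      simp only [Set.mem_iUnion, Set.mem_singleton_iff] at ht1 ht2
      obtain ⟨q, rfl⟩ := ht1
      obtain ⟨i, rfl⟩ := ht2
      exact hω q i
  exact hindep


lemma key_identification
    {Ω 𝒳 : Type*} [mΩ : MeasurableSpace Ω] [StandardBorelSpace Ω]
    [m𝒳 : MeasurableSpace 𝒳] [StandardBorelSpace 𝒳]
    (P : Measure Ω) [IsProbabilityMeasure P]
    (X : Ω → 𝒳) (hX : Measurable X)
    (A : Ω → Fin 2) (hA : Measurable A)
    (M : Fin 2 → Ω → ℝ) (hM : ∀ i, Measurable (M i))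
    (νM : Measure ℝ) [SigmaFinite νM]
    (f_M : ℝ → Fin 2 → 𝒳 → ℝ)
    (hfM_meas : Measurable (fun p : ℝ × Fin 2 × 𝒳 => f_M p.1 p.2.1 p.2.2))
    (hfM : ∀ g : ℝ → 𝒳 → ℝ, Measurable (Function.uncurry g) →
      (∃ C, ∀ m x, |g m x| ≤ C) →
      (P[fun ω => g (M (A ω) ω) (X ω) |
          MeasurableSpace.comap (fun ω => (A ω, X ω)) inferInstance])
        =ᵐ[P] fun ω => ∫ m, g m (X ω) * f_M m (A ω) (X ω) ∂νM)
    (a' : Fin 2)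
    (hSI1 : CondIndepFun (MeasurableSpace.comap X inferInstance) hX.comap_le (M a') A P)
    (hSI3 : ∀ᵐ ω ∂P, 0 < (P[fun ω' => if A ω' = a' then (1:ℝ) else 0 |
        MeasurableSpace.comap X inferInstance]) ω)
    (g : ℝ → 𝒳 → ℝ) (hg : Measurable (Function.uncurry g)) (C : ℝ)
    (hgC : ∀ m x, |g m x| ≤ C) :
    (∀ᵐ ω ∂P, Integrable (fun m => f_M m a' (X ω)) νM) ∧
    (P[fun ω => g (M a' ω) (X ω) | MeasurableSpace.comap X inferInstance]
      =ᵐ[P] fun ω => ∫ m, g m (X ω) * f_M m a' (X ω) ∂νM) := by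
  classical
  have hG : MeasurableSpace.comap X inferInstance ≤ mΩ := hX.comap_le
  have h𝒜 : MeasurableSpace.comap (fun ω => (A ω, X ω)) inferInstance ≤ mΩ :=
    (hA.prodMk hX).comap_le
  have hG𝒜 : MeasurableSpace.comap X inferInstance ≤
      MeasurableSpace.comap (fun ω => (A ω, X ω)) inferInstance := comap_fst_le X A
  have hXG : Measurable[MeasurableSpace.comap X inferInstance] X := Measurable.of_comap_le le_rfl
  -- observed mediator measurable
  have hMA : Measurable (fun ω => M (A ω) ω) := by
    have heq : (fun ω => M (A ω) ω) = fun ω => if A ω = 0 then M 0 ω else M 1 ω := by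
      funext ω
      by_cases h : A ω = 0
      · rw [h]; simp
      · have h1 : A ω = 1 := by omega
        rw [h1]; simp [h]
    rw [heq]
    exact Measurable.ite (hA (measurableSet_singleton 0)) (hM 0) (hM 1)
  -- χ
  set χ : Ω → ℝ := fun ω => if A ω = a' then (1:ℝ) else 0 with hχdef
  have hχmeas : Measurable χ :=
    Measurable.ite (hA (measurableSet_singleton a')) measurable_const measurable_const
  have hχ𝒜 : Measurable[MeasurableSpace.comap (fun ω => (A ω, X ω)) inferInstance] χ := by
    have h1 : Measurable (fun p : Fin 2 × 𝒳 => if p.1 = a' then (1:ℝ) else 0) :=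
      Measurable.ite (measurable_fst (measurableSet_singleton a')) measurable_const
        measurable_const
    exact h1.comp (Measurable.of_comap_le le_rfl)
  have hχbd : ∀ ω, |χ ω| ≤ 1 := fun ω => by
    by_cases h : A ω = a' <;> simp [hχdef, h]
  have hχint : Integrable χ P := integrable_of_bound P χ 1 hχmeas.aestronglyMeasurable hχbd
  -- density integrable a.e. (at (A ω, X ω))
  have hdens : ∀ᵐ ω ∂P, Integrable (fun m => f_M m (A ω) (X ω)) νM ∧
      ∫ m, f_M m (A ω) (X ω) ∂νM = 1 := by
    have h1 := hfM (fun _ _ => (1:ℝ)) measurable_const ⟨1, fun _ _ => by norm_num⟩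
    have h2 : P[(fun _ : Ω => (1:ℝ)) |
        MeasurableSpace.comap (fun ω => (A ω, X ω)) inferInstance] = fun _ => (1:ℝ) :=
      condExp_const h𝒜 (1:ℝ)
    rw [show (fun ω => (fun _ _ => (1:ℝ)) (M (A ω) ω) (X ω)) = fun _ : Ω => (1:ℝ) from rfl,
      h2] at h1
    filter_upwards [h1.symm] with ω hω
    simp only [one_mul] at hω
    refine ⟨?_, hω⟩
    by_contra hni
    rw [integral_undef hni] at hω
    exact zero_ne_one hω
  -- S: set of x where density at a' is integrable
  have hfsm : StronglyMeasurable (Function.uncurry fun (x : 𝒳) (m : ℝ) => f_M m a' x) := by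
    refine Measurable.stronglyMeasurable ?_
    exact hfM_meas.comp ((measurable_snd).prodMk
      (measurable_const.prodMk measurable_fst))
  have hSmeas : MeasurableSet {x : 𝒳 | Integrable (fun m => f_M m a' x) νM} :=
    _root_.measurableSet_integrable hfsm
  set S := {x : 𝒳 | Integrable (fun m => f_M m a' x) νM} with hSdef
  set h_D : Ω → ℝ := fun ω => if X ω ∈ S then 0 else 1 with hDdef
  have hD_smG : StronglyMeasurable[MeasurableSpace.comap X inferInstance] h_D := by
    refine Measurable.stronglyMeasurable ?_
    exact (Measurable.ite hSmeas measurable_const measurable_const).comp hXG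
  have hDmeas : Measurable h_D :=
    (Measurable.ite hSmeas measurable_const measurable_const).comp hX
  have hDbd : ∀ ω, |h_D ω| ≤ 1 := fun ω => by
    by_cases h : X ω ∈ S <;> simp [hDdef, h]
  have hDχ0 : (h_D * χ : Ω → ℝ) =ᵐ[P] 0 := by
    filter_upwards [hdens] with ω hω
    by_cases h : A ω = a'
    · have hXS : X ω ∈ S := by rw [hSdef]; rw [h] at hω; exact hω.1
      simp [hDdef, hXS]
    · simp [hχdef, h]
  have hπpos := hSI3
  -- conclude first conjunct
  have hfirst : ∀ᵐ ω ∂P, Integrable (fun m => f_M m a' (X ω)) νM := by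
    have e1 : P[h_D * χ | MeasurableSpace.comap X inferInstance]
        =ᵐ[P] h_D * P[χ | MeasurableSpace.comap X inferInstance] :=
      condExp_mul_of_stronglyMeasurable_left hD_smG
        (integrable_of_bound P _ 1 (hDmeas.mul hχmeas).aestronglyMeasurable
          (fun ω => by
            have := mul_le_mul (hDbd ω) (hχbd ω) (abs_nonneg _) zero_le_one
            simpa [abs_mul] using this))
        hχint
    have e2 : P[h_D * χ | MeasurableSpace.comap X inferInstance] =ᵐ[P] 0 := by
      refine (condExp_congr_ae hDχ0).trans ?_
      rw [condExp_zero]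
    filter_upwards [e1.symm.trans e2, hπpos] with ω h1 h2
    have : h_D ω = 0 := by
      have h3 : h_D ω * (P[χ | MeasurableSpace.comap X inferInstance]) ω = 0 := h1
      rcases mul_eq_zero.mp h3 with h | h
      · exact h
      · exact absurd h (ne_of_gt h2)
    by_contra hni
    have hx : X ω ∉ S := hni
    simp [hDdef, hx] at this
  -- Part 2
  set F : Ω → ℝ := fun ω => g (M a' ω) (X ω) with hFdef
  have hFmeas : Measurable F := hg.comp ((hM a').prodMk hX)
  have hFint : Integrable F P :=
    integrable_of_bound P F C hFmeas.aestronglyMeasurable (fun ω => hgC _ _)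
  set F' : Ω → ℝ := fun ω => g (M (A ω) ω) (X ω) with hF'def
  have hF'meas : Measurable F' := hg.comp (hMA.prodMk hX)
  have hF'int : Integrable F' P :=
    integrable_of_bound P F' C hF'meas.aestronglyMeasurable (fun ω => hgC _ _)
  have hφmeas : Measurable (fun x : 𝒳 => ∫ m, g m x * f_M m a' x ∂νM) := by
    have hsm : StronglyMeasurable (fun p : 𝒳 × ℝ => g p.2 p.1 * f_M p.2 a' p.1) :=
      Measurable.stronglyMeasurable
        ((hg.comp (measurable_snd.prodMk measurable_fst)).mul
          (hfM_meas.comp (measurable_snd.prodMk (measurable_const.prodMk measurable_fst))))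
    exact hsm.integral_prod_right'.measurable
  set u : Ω → ℝ := fun ω => ∫ m, g m (X ω) * f_M m a' (X ω) ∂νM with hudef
  have hu_smG : StronglyMeasurable[MeasurableSpace.comap X inferInstance] u :=
    (hφmeas.comp hXG).stronglyMeasurable
  set v : Ω → ℝ := fun ω => ∫ m, g m (X ω) * f_M m (A ω) (X ω) ∂νM with hvdef
  have hχF'F : (χ * F' : Ω → ℝ) = χ * F := by
    funext ω
    by_cases h : A ω = a'
    · simp only [Pi.mul_apply, hF'def, hFdef, h]
    · simp [hχdef, h]
  have hχvu : (χ * v : Ω → ℝ) = χ * u := by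
    funext ω
    by_cases h : A ω = a'
    · simp only [Pi.mul_apply, hvdef, hudef, h]
    · simp [hχdef, h]
  have hχF'int : Integrable (χ * F') P := by
    refine integrable_of_bound P _ C (hχmeas.mul hF'meas).aestronglyMeasurable (fun ω => ?_)
    have := mul_le_mul (hχbd ω) (hgC (M (A ω) ω) (X ω)) (abs_nonneg _) zero_le_one
    simpa [abs_mul] using this
  have hpull1 : P[χ * F' | MeasurableSpace.comap (fun ω => (A ω, X ω)) inferInstance]
      =ᵐ[P] χ * P[F' | MeasurableSpace.comap (fun ω => (A ω, X ω)) inferInstance] :=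
    condExp_mul_of_stronglyMeasurable_left hχ𝒜.stronglyMeasurable hχF'int hF'int
  have hv : P[F' | MeasurableSpace.comap (fun ω => (A ω, X ω)) inferInstance] =ᵐ[P] v :=
    hfM g hg ⟨C, hgC⟩
  have hχv : χ * P[F' | MeasurableSpace.comap (fun ω => (A ω, X ω)) inferInstance]
      =ᵐ[P] χ * v := hv.mono fun ω h => by simp only [Pi.mul_apply, h]
  have hZinner : P[χ * F' | MeasurableSpace.comap (fun ω => (A ω, X ω)) inferInstance]
      =ᵐ[P] χ * u := (hpull1.trans hχv).trans (by rw [hχvu])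
  have htower : P[P[χ * F' | MeasurableSpace.comap (fun ω => (A ω, X ω)) inferInstance]
      | MeasurableSpace.comap X inferInstance]
      =ᵐ[P] P[χ * F' | MeasurableSpace.comap X inferInstance] :=
    condExp_condExp_of_le hG𝒜 h𝒜
  have hZ1 : P[χ * F | MeasurableSpace.comap X inferInstance]
      =ᵐ[P] P[χ * u | MeasurableSpace.comap X inferInstance] := by
    rw [← hχF'F]
    exact htower.symm.trans (condExp_congr_ae hZinner)
  have hχuint : Integrable (u * χ) P := by
    have h1 : Integrable (fun ω => χ ω *
        (P[F' | MeasurableSpace.comap (fun ω => (A ω, X ω)) inferInstance]) ω) P :=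
      integrable_condExp.bdd_mul (c := 1) hχmeas.aestronglyMeasurable
        (ae_of_all _ fun ω => by simpa [Real.norm_eq_abs] using hχbd ω)
    have h2 : Integrable (χ * v) P := h1.congr hχv
    rw [hχvu] at h2
    exact h2.congr (Filter.EventuallyEq.of_eq (mul_comm χ u))
  have hpull2 : P[u * χ | MeasurableSpace.comap X inferInstance]
      =ᵐ[P] u * P[χ | MeasurableSpace.comap X inferInstance] :=
    condExp_mul_of_stronglyMeasurable_left hu_smG hχuint hχint
  have hZ2 : P[χ * F | MeasurableSpace.comap X inferInstance]
      =ᵐ[P] u * P[χ | MeasurableSpace.comap X inferInstance] := by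
    refine hZ1.trans ?_
    rw [mul_comm χ u]
    exact hpull2
  have hχFint : Integrable (χ * F) P := by rw [← hχF'F]; exact hχF'int
  have hq1 : P[χ * F | MeasurableSpace.comap X inferInstance] =ᵐ[P]
      fun ω => ∫ ω', (χ * F) ω' ∂(condExpKernel P (MeasurableSpace.comap X inferInstance) ω) :=
    condExp_ae_eq_integral_condExpKernel hG hχFint
  have hq2 : P[F | MeasurableSpace.comap X inferInstance] =ᵐ[P]
      fun ω => ∫ ω', F ω' ∂(condExpKernel P (MeasurableSpace.comap X inferInstance) ω) :=
    condExp_ae_eq_integral_condExpKernel hG hFint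
  have hq3 : P[χ | MeasurableSpace.comap X inferInstance] =ᵐ[P]
      fun ω => ∫ ω', χ ω' ∂(condExpKernel P (MeasurableSpace.comap X inferInstance) ω) :=
    condExp_ae_eq_integral_condExpKernel hG hχint
  have hK1 := condexpKernel_ae_dirac_comap P X hX
  have hK2 := ae_indepFun_of_condIndepFun P X hX (M a') (hM a') A hA hSI1
  have hWπ : P[χ * F | MeasurableSpace.comap X inferInstance] =ᵐ[P]
      fun ω => (P[F | MeasurableSpace.comap X inferInstance]) ω
        * (P[χ | MeasurableSpace.comap X inferInstance]) ω := by
    filter_upwards [hq1, hq2, hq3, hK1, hK2] with ω h1 h2 h3 h4 h5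
    haveI : IsProbabilityMeasure
        (condExpKernel P (MeasurableSpace.comap X inferInstance) ω) := inferInstance
    rw [h1, h2, h3]
    have hXae : ∀ᵐ ω' ∂(condExpKernel P (MeasurableSpace.comap X inferInstance) ω),
        X ω' = X ω := ae_iff.mpr h4
    have hφm : Measurable (fun mval : ℝ => g mval (X ω)) :=
      hg.comp (measurable_id.prodMk measurable_const)
    have hψm : Measurable (fun i : Fin 2 => if i = a' then (1:ℝ) else 0) := measurable_from_top
    have hindep2 : IndepFun ((fun mval : ℝ => g mval (X ω)) ∘ (M a'))
        ((fun i : Fin 2 => if i = a' then (1:ℝ) else 0) ∘ A)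
        (condExpKernel P (MeasurableSpace.comap X inferInstance) ω) := h5.comp hφm hψm
    have hint1 : Integrable ((fun mval : ℝ => g mval (X ω)) ∘ (M a'))
        (condExpKernel P (MeasurableSpace.comap X inferInstance) ω) :=
      integrable_of_bound _ _ C (hφm.comp (hM a')).aestronglyMeasurable (fun ω' => hgC _ _)
    have hint2 : Integrable ((fun i : Fin 2 => if i = a' then (1:ℝ) else 0) ∘ A)
        (condExpKernel P (MeasurableSpace.comap X inferInstance) ω) :=
      integrable_of_bound _ _ 1 (hψm.comp hA).aestronglyMeasurable hχbd
    have hmul := hindep2.integral_mul_eq_mul_integral hint1.aestronglyMeasurable hint2.aestronglyMeasurable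
    have hc1 : ∫ ω', (χ * F) ω'
          ∂(condExpKernel P (MeasurableSpace.comap X inferInstance) ω)
        = ∫ ω', (((fun mval : ℝ => g mval (X ω)) ∘ (M a')) ω'
            * ((fun i : Fin 2 => if i = a' then (1:ℝ) else 0) ∘ A) ω')
          ∂(condExpKernel P (MeasurableSpace.comap X inferInstance) ω) := by
      refine integral_congr_ae (hXae.mono fun ω' h => ?_)
      simp only [Pi.mul_apply, hFdef, hχdef, Function.comp_apply, h]
      ring
    have hc2 : ∫ ω', F ω' ∂(condExpKernel P (MeasurableSpace.comap X inferInstance) ω)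
        = ∫ ω', ((fun mval : ℝ => g mval (X ω)) ∘ (M a')) ω'
          ∂(condExpKernel P (MeasurableSpace.comap X inferInstance) ω) := by
      refine integral_congr_ae (hXae.mono fun ω' h => ?_)
      simp only [hFdef, Function.comp_apply, h]
    have hc3 : ∫ ω', χ ω' ∂(condExpKernel P (MeasurableSpace.comap X inferInstance) ω)
        = ∫ ω', ((fun i : Fin 2 => if i = a' then (1:ℝ) else 0) ∘ A) ω'
          ∂(condExpKernel P (MeasurableSpace.comap X inferInstance) ω) := rfl
    rw [hc1, hc2, hc3]
    exact hmul
  have hfin : (fun ω => u ω * (P[χ | MeasurableSpace.comap X inferInstance]) ω) =ᵐ[P]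
      fun ω => (P[F | MeasurableSpace.comap X inferInstance]) ω
        * (P[χ | MeasurableSpace.comap X inferInstance]) ω := hZ2.symm.trans hWπ
  refine ⟨hfirst, ?_⟩
  filter_upwards [hfin, hπpos] with ω h1 h2
  exact (mul_right_cancel₀ (ne_of_gt h2) h1).symm


/-- sensitivity decomposition of the mediation effects on the
linear scale. Under the hypotheses of the linear-scale identification result
for every pair `(a, a')`, the average mediation effects satisfy
`δ(a) = δ₀(a) − λϖ` and `ζ(a) = ζ₀(a) + λϖ`, and consequently the average
total effect `τ = δ₀(1) + ζ₀(0)` does not depend on `λ`. -/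

theorem linear_sensitivity_effect_decomposition
    {Ω 𝒳 : Type*} [MeasurableSpace Ω] [StandardBorelSpace Ω]
    [MeasurableSpace 𝒳] [StandardBorelSpace 𝒳]
    (P : Measure Ω) [IsProbabilityMeasure P]
    (X : Ω → 𝒳) (hX : Measurable X)
    (A : Ω → Fin 2) (hA : Measurable A)
    (M : Fin 2 → Ω → ℝ) (hM : ∀ i, Measurable (M i))
    (hMrange : ∀ i ω, M i ω ∈ Set.Icc (0 : ℝ) 1)
    (Y : Fin 2 → ℝ → Ω → ℝ)
    (hYmeas : ∀ i, Measurable (fun p : ℝ × Ω => Y i p.1 p.2))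
    (hYrange : ∀ i m ω, Y i m ω ∈ Set.Icc (0 : ℝ) 1)
    -- r_y, a bounded jointly measurable version of E[Y | M = m, A = a, X = x]
    (r_y : ℝ → Fin 2 → 𝒳 → ℝ)
    (hr_meas : Measurable (fun p : ℝ × Fin 2 × 𝒳 => r_y p.1 p.2.1 p.2.2))
    (hr_bdd : ∃ C, ∀ m i x, |r_y m i x| ≤ C)
    -- f_M, a jointly measurable conditional density of the observed mediator
    -- given A = a, X = x with respect to a σ-finite measure ν_M on [0,1]
    (νM : Measure ℝ) [SigmaFinite νM] (hνM : νM (Set.Icc (0 : ℝ) 1)ᶜ = 0)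
    (f_M : ℝ → Fin 2 → 𝒳 → ℝ)
    (hfM_meas : Measurable (fun p : ℝ × Fin 2 × 𝒳 => f_M p.1 p.2.1 p.2.2))
    (hfM : ∀ g : ℝ → 𝒳 → ℝ, Measurable (Function.uncurry g) →
      (∃ C, ∀ m x, |g m x| ≤ C) →
      (P[fun ω => g (M (A ω) ω) (X ω) |
          MeasurableSpace.comap (fun ω => (A ω, X ω)) inferInstance])
        =ᵐ[P] fun ω => ∫ m, g m (X ω) * f_M m (A ω) (X ω) ∂νM)
    (l : ℝ)
    -- SI2C, substituted form, for every pair (a, a')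
    (hSI2C : ∀ a a' : Fin 2,
      P[fun ω => Y a (M a' ω) ω |
          MeasurableSpace.comap (fun ω => (M 0 ω, M 1 ω, X ω)) inferInstance]
        =ᵐ[P] fun ω => r_y (M a' ω) a (X ω) + l * (M a ω - M a' ω))
    -- SI1 for every a'
    (hSI1 : ∀ a' : Fin 2,
      CondIndepFun (MeasurableSpace.comap X inferInstance) hX.comap_le (M a') A P)
    -- SI3 for every a'
    (hSI3 : ∀ a' : Fin 2, ∀ᵐ ω ∂P, 0 < (P[fun ω' => if A ω' = a' then (1 : ℝ) else 0 |
        MeasurableSpace.comap X inferInstance]) ω) :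
    (∀ a : Fin 2,
      -- δ(a) = δ₀(a) − λϖ
      (∫ ω, (Y a (M 1 ω) ω - Y a (M 0 ω) ω) ∂P) =
        (∫ x, (∫ m, r_y m a x * (f_M m 1 x - f_M m 0 x) ∂νM) ∂(P.map X))
          - l * ((∫ ω, M 1 ω ∂P) - ∫ ω, M 0 ω ∂P) ∧
      -- ζ(a) = ζ₀(a) + λϖ
      (∫ ω, (Y 1 (M a ω) ω - Y 0 (M a ω) ω) ∂P) =
        (∫ x, (∫ m, (r_y m 1 x - r_y m 0 x) * f_M m a x ∂νM) ∂(P.map X))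
          + l * ((∫ ω, M 1 ω ∂P) - ∫ ω, M 0 ω ∂P)) ∧
    -- τ = δ₀(1) + ζ₀(0), free of λ
    (∫ ω, (Y 1 (M 1 ω) ω - Y 0 (M 0 ω) ω) ∂P) =
      (∫ x, (∫ m, r_y m 1 x * (f_M m 1 x - f_M m 0 x) ∂νM) ∂(P.map X))
        + (∫ x, (∫ m, (r_y m 1 x - r_y m 0 x) * f_M m 0 x ∂νM) ∂(P.map X)) := by

  classical
  obtain ⟨C, hC⟩ := hr_bdd
  have hG : MeasurableSpace.comap X inferInstance ≤ ‹MeasurableSpace Ω› := hX.comap_le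
  have hℳ : MeasurableSpace.comap (fun ω => (M 0 ω, M 1 ω, X ω)) inferInstance
      ≤ ‹MeasurableSpace Ω› := ((hM 0).prodMk ((hM 1).prodMk hX)).comap_le
  -- basic integrabilities
  have hYint : ∀ a a' : Fin 2, Integrable (fun ω => Y a (M a' ω) ω) P := by
    intro a a'
    refine integrable_of_bound P _ 1
      (((hYmeas a).comp ((hM a').prodMk measurable_id)).aestronglyMeasurable) (fun ω => ?_)
    have h := hYrange a (M a' ω) ω
    rw [abs_le]; constructor <;> [linarith [h.1]; exact h.2]
  have hMint : ∀ i : Fin 2, Integrable (M i) P := by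
    intro i
    refine integrable_of_bound P _ 1 ((hM i).aestronglyMeasurable) (fun ω => ?_)
    have h := hMrange i ω
    rw [abs_le]; constructor <;> [linarith [h.1]; exact h.2]
  have hrint : ∀ a a' : Fin 2, Integrable (fun ω => r_y (M a' ω) a (X ω)) P := by
    intro a a'
    refine integrable_of_bound P _ C
      ((hr_meas.comp ((hM a').prodMk (measurable_const.prodMk hX))).aestronglyMeasurable)
      (fun ω => hC _ _ _)
  -- the key identification for each pair
  have hgmeas : ∀ a : Fin 2, Measurable (Function.uncurry (fun m x => r_y m a x)) :=
    fun a => hr_meas.comp (measurable_fst.prodMk (measurable_const.prodMk measurable_snd))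
  have hkey := fun a a' : Fin 2 =>
    key_identification P X hX A hA M hM νM f_M hfM_meas hfM a' (hSI1 a') (hSI3 a')
      (fun m x => r_y m a x) (hgmeas a) C (fun m x => hC m a x)
  -- measurability of φ
  have hφmeas : ∀ a a' : Fin 2, Measurable (fun x : 𝒳 => ∫ m, r_y m a x * f_M m a' x ∂νM) := by
    intro a a'
    have hsm : StronglyMeasurable (fun p : 𝒳 × ℝ => r_y p.2 a p.1 * f_M p.2 a' p.1) :=
      Measurable.stronglyMeasurable
        ((hr_meas.comp (measurable_snd.prodMk (measurable_const.prodMk measurable_fst))).mul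
          (hfM_meas.comp (measurable_snd.prodMk (measurable_const.prodMk measurable_fst))))
    exact hsm.integral_prod_right'.measurable
  -- identification of ∫ r_y(M a', a, X) and integrability over the image measure
  have hmain : ∀ a a' : Fin 2,
      (∫ ω, r_y (M a' ω) a (X ω) ∂P
        = ∫ x, (∫ m, r_y m a x * f_M m a' x ∂νM) ∂(P.map X)) ∧
      Integrable (fun x => ∫ m, r_y m a x * f_M m a' x ∂νM) (P.map X) := by
    intro a a'
    have hk2 := (hkey a a').2
    have hu_int : Integrable (fun ω => ∫ m, r_y m a (X ω) * f_M m a' (X ω) ∂νM) P :=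
      integrable_condExp.congr hk2
    have hφint : Integrable (fun x => ∫ m, r_y m a x * f_M m a' x ∂νM) (P.map X) :=
      (integrable_map_measure (hφmeas a a').aestronglyMeasurable hX.aemeasurable).mpr hu_int
    refine ⟨?_, hφint⟩
    calc ∫ ω, r_y (M a' ω) a (X ω) ∂P
        = ∫ ω, (P[fun ω => r_y (M a' ω) a (X ω) |
            MeasurableSpace.comap X inferInstance]) ω ∂P := (integral_condExp hG).symm
      _ = ∫ ω, (∫ m, r_y m a (X ω) * f_M m a' (X ω) ∂νM) ∂P := integral_congr_ae hk2
      _ = ∫ x, (∫ m, r_y m a x * f_M m a' x ∂νM) ∂(P.map X) :=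
          (integral_map hX.aemeasurable (hφmeas a a').aestronglyMeasurable).symm
  -- full expectation for each pair
  have hI : ∀ a a' : Fin 2, ∫ ω, Y a (M a' ω) ω ∂P
      = (∫ x, (∫ m, r_y m a x * f_M m a' x ∂νM) ∂(P.map X))
        + l * ((∫ ω, M a ω ∂P) - ∫ ω, M a' ω ∂P) := by
    intro a a'
    have hlin : Integrable (fun ω => l * (M a ω - M a' ω)) P :=
      (((hMint a).sub (hMint a')).const_mul l)
    calc ∫ ω, Y a (M a' ω) ω ∂P
        = ∫ ω, (P[fun ω => Y a (M a' ω) ω |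
            MeasurableSpace.comap (fun ω => (M 0 ω, M 1 ω, X ω)) inferInstance]) ω ∂P :=
          (integral_condExp hℳ).symm
      _ = ∫ ω, (r_y (M a' ω) a (X ω) + l * (M a ω - M a' ω)) ∂P :=
          integral_congr_ae (hSI2C a a')
      _ = (∫ ω, r_y (M a' ω) a (X ω) ∂P) + ∫ ω, l * (M a ω - M a' ω) ∂P :=
          integral_add (hrint a a') hlin
      _ = (∫ ω, r_y (M a' ω) a (X ω) ∂P) + l * ((∫ ω, M a ω ∂P) - ∫ ω, M a' ω ∂P) := by
          rw [integral_const_mul, integral_sub (hMint a) (hMint a')]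
      _ = (∫ x, (∫ m, r_y m a x * f_M m a' x ∂νM) ∂(P.map X))
            + l * ((∫ ω, M a ω ∂P) - ∫ ω, M a' ω ∂P) := by rw [(hmain a a').1]
  -- a.e. integrability of the density under the image measure
  have hfae : ∀ a' : Fin 2, ∀ᵐ x ∂(P.map X), Integrable (fun m => f_M m a' x) νM := by
    intro a'
    have hfsm : StronglyMeasurable (Function.uncurry fun (x : 𝒳) (m : ℝ) => f_M m a' x) :=
      Measurable.stronglyMeasurable
        (hfM_meas.comp ((measurable_snd).prodMk (measurable_const.prodMk measurable_fst)))
    rw [MeasureTheory.ae_map_iff hX.aemeasurable (_root_.measurableSet_integrable hfsm)]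
    exact (hkey 0 a').1
  -- splitting the δ₀ integrand
  have hδsplit : ∀ a : Fin 2,
      (∫ x, (∫ m, r_y m a x * (f_M m 1 x - f_M m 0 x) ∂νM) ∂(P.map X))
        = (∫ x, (∫ m, r_y m a x * f_M m 1 x ∂νM) ∂(P.map X))
          - ∫ x, (∫ m, r_y m a x * f_M m 0 x ∂νM) ∂(P.map X) := by
    intro a
    have h1 : (fun x => ∫ m, r_y m a x * (f_M m 1 x - f_M m 0 x) ∂νM) =ᵐ[P.map X]
        fun x => (∫ m, r_y m a x * f_M m 1 x ∂νM) - ∫ m, r_y m a x * f_M m 0 x ∂νM := by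
      filter_upwards [hfae 1, hfae 0] with x hx1 hx0
      have hrm0 : Measurable (fun m : ℝ => r_y m a x) :=
        hr_meas.comp (measurable_id.prodMk (measurable_const : Measurable fun _ : ℝ => (a, x)))
      have hrm : AEStronglyMeasurable (fun m => r_y m a x) νM := hrm0.aestronglyMeasurable
      have hb : ∀ᵐ m ∂νM, ‖r_y m a x‖ ≤ C := ae_of_all _ fun m => by simpa using hC m a x
      rw [← integral_sub (hx1.bdd_mul hrm hb) (hx0.bdd_mul hrm hb)]
      congr 1
      funext m
      ring
    rw [integral_congr_ae h1, integral_sub (hmain a 1).2 (hmain a 0).2]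
  -- splitting the ζ₀ integrand
  have hζsplit : ∀ a : Fin 2,
      (∫ x, (∫ m, (r_y m 1 x - r_y m 0 x) * f_M m a x ∂νM) ∂(P.map X))
        = (∫ x, (∫ m, r_y m 1 x * f_M m a x ∂νM) ∂(P.map X))
          - ∫ x, (∫ m, r_y m 0 x * f_M m a x ∂νM) ∂(P.map X) := by
    intro a
    have h1 : (fun x => ∫ m, (r_y m 1 x - r_y m 0 x) * f_M m a x ∂νM) =ᵐ[P.map X]
        fun x => (∫ m, r_y m 1 x * f_M m a x ∂νM) - ∫ m, r_y m 0 x * f_M m a x ∂νM := by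
      filter_upwards [hfae a] with x hx
      have hrm1' : Measurable (fun m : ℝ => r_y m 1 x) :=
        hr_meas.comp (measurable_id.prodMk
          (measurable_const : Measurable fun _ : ℝ => ((1 : Fin 2), x)))
      have hrm0' : Measurable (fun m : ℝ => r_y m 0 x) :=
        hr_meas.comp (measurable_id.prodMk
          (measurable_const : Measurable fun _ : ℝ => ((0 : Fin 2), x)))
      have hrm1 : AEStronglyMeasurable (fun m => r_y m 1 x) νM := hrm1'.aestronglyMeasurable
      have hrm0 : AEStronglyMeasurable (fun m => r_y m 0 x) νM := hrm0'.aestronglyMeasurable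
      rw [← integral_sub (hx.bdd_mul hrm1 (ae_of_all _ fun m => by simpa using hC m 1 x))
        (hx.bdd_mul hrm0 (ae_of_all _ fun m => by simpa using hC m 0 x))]
      congr 1
      funext m
      ring
    rw [integral_congr_ae h1, integral_sub (hmain 1 a).2 (hmain 0 a).2]
  refine ⟨fun a => ⟨?_, ?_⟩, ?_⟩
  · rw [integral_sub (hYint a 1) (hYint a 0), hI a 1, hI a 0, hδsplit a]
    ring
  · rw [integral_sub (hYint 1 a) (hYint 0 a), hI 1 a, hI 0 a, hζsplit a]
    ring
  · rw [integral_sub (hYint 1 1) (hYint 0 0), hI 1 1, hI 0 0, hδsplit 1, hζsplit 0]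
    ring
end
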